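/- Let g, h, y : (t₀, ∞) → ℝ be nonnegative locally integrable functions such that y' ≤ g·y + h (in the sense that y is absolutely continuous on compact subintervals with this differential inequality a.e.), and suppose there are positive constants γ, a₁, a₂, a₃ such that for every t ≥ t₀: ∫_t^{t+γ} g ≤ a₁, ∫_t^{t+γ} h ≤ a₂, and ∫_t^{t+γ} y ≤ a₃. Then for all t ≥ t₀ + γ, y(t) ≤ (a₃/γ + a₂) e^{a₁}. -/

import Mathlib

open MeasureTheory

set_option maxHeartbeats 2000000 in
/-- The Uniform Gronwall Lemma: if y, g, h are nonnegative locally integrable functions on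
(t₀, ∞), y satisfies y' ≤ g y + h (encoded in integrated form, i.e. y is absolutely
continuous with this differential inequality a.e.), and the sliding averages of g, h, y over
windows of length γ are bounded by a₁, a₂, a₃ respectively, then
y(t) ≤ (a₃/γ + a₂) e^{a₁} for all t ≥ t₀ + γ. -/
theorem uniform_gronwall (t₀ γ a₁ a₂ a₃ : ℝ) (g h y : ℝ → ℝ)
    (hγ : 0 < γ) (ha₁ : 0 < a₁) (ha₂ : 0 < a₂) (ha₃ : 0 < a₃)
    (hg0 : ∀ t, t₀ < t → 0 ≤ g t) (hh0 : ∀ t, t₀ < t → 0 ≤ h t)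
    (hy0 : ∀ t, t₀ < t → 0 ≤ y t)
    (hint : ∀ s t : ℝ, t₀ < s → s ≤ t →
      IntervalIntegrable g volume s t ∧ IntervalIntegrable h volume s t ∧
        IntervalIntegrable y volume s t)
    (hdiff : ∀ s t : ℝ, t₀ < s → s ≤ t →
      y t - y s ≤ ∫ u in s..t, (g u * y u + h u))
    (hg : ∀ t, t₀ ≤ t → (∫ u in t..(t + γ), g u) ≤ a₁)
    (hh : ∀ t, t₀ ≤ t → (∫ u in t..(t + γ), h u) ≤ a₂)
    (hy : ∀ t, t₀ ≤ t → (∫ u in t..(t + γ), y u) ≤ a₃) :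
    ∀ t, t₀ + γ ≤ t → y t ≤ (a₃ / γ + a₂) * Real.exp a₁ := by
  intro t ht
  -- Step A: the ε-family of bounds
  have key : ∀ ε : ℝ, 0 < ε → ε < γ → ε ≤ 1/2 →
      y t ≤ (a₃ / (γ - ε) + ε + a₂) * Real.exp ((1 + 2*ε) * a₁) := by
    intro ε hε hεγ hεhalf
    have hγε : 0 < γ - ε := by linarith
    set a := t - γ + ε with ha
    have hat₀ : t₀ < a := by simp only [ha]; linarith
    have hat : a < t := by simp only [ha]; linarith
    obtain ⟨hgIat, hhIat, hyIat⟩ := hint a t hat₀ hat.le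
    -- ∫_a^t y ≤ a₃
    have hyat : (∫ u in a..t, y u) ≤ a₃ := by
      have h1 := hy a (by linarith)
      have h2 : t ≤ a + γ := by simp only [ha]; linarith
      obtain ⟨_, _, hyI2⟩ := hint t (a+γ) (by linarith) h2
      have h3 : 0 ≤ ∫ u in t..(a+γ), y u :=
        intervalIntegral.integral_nonneg h2
          (fun u hu => hy0 u (lt_of_lt_of_le hat₀ (le_trans hat.le hu.1)))
      have h4 := intervalIntegral.integral_add_adjacent_intervals hyIat hyI2
      linarith
    set m := a₃/(γ-ε) + ε with hm
    have hm0 : 0 < m := by positivity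
    -- find a good starting point s
    have hexists : ∃ s ∈ Set.Ioo a t, y s < m := by
      by_contra hcon
      push_neg at hcon
      have hres : volume.restrict (Set.Icc a t) = volume.restrict (Set.Ioo a t) :=
        (Measure.restrict_congr_set Ioo_ae_eq_Icc).symm
      have hae : (fun _ : ℝ => m) ≤ᵐ[volume.restrict (Set.Icc a t)] y := by
        rw [hres]
        exact (ae_restrict_iff' measurableSet_Ioo).2 (ae_of_all _ fun x hx => hcon x hx)
      have hmono := intervalIntegral.integral_mono_ae_restrict hat.le
        (intervalIntegrable_const (c := m)) hyIat hae
      rw [intervalIntegral.integral_const] at hmono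
      have : m * (γ - ε) ≤ a₃ := by
        have : (t - a) = γ - ε := by simp only [ha]; ring
        rw [this] at hmono
        simp only [smul_eq_mul] at hmono
        linarith
      have hgt : a₃ < m * (γ - ε) := by
        simp only [hm]
        rw [add_mul, div_mul_cancel₀ _ hγε.ne']
        nlinarith
      linarith
    obtain ⟨s, hs, hys⟩ := hexists
    have hst₀ : t₀ < s := lt_trans hat₀ hs.1
    have hst : s < t := hs.2
    have hsγ : t < s + γ := by have := hs.1; simp only [ha] at this; linarith
    obtain ⟨hgI, hhI, hyI⟩ := hint s t hst₀ hst.le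
    -- ∫_s^t g ≤ a₁, ∫_s^t h ≤ a₂
    have hKle : (∫ u in s..t, g u) ≤ a₁ := by
      obtain ⟨hgI2, _, _⟩ := hint t (s+γ) (lt_trans hst₀ hst) hsγ.le
      have h3 : 0 ≤ ∫ u in t..(s+γ), g u :=
        intervalIntegral.integral_nonneg hsγ.le
          (fun u hu => hg0 u (lt_of_lt_of_le (lt_trans hst₀ hst) hu.1))
      have h4 := intervalIntegral.integral_add_adjacent_intervals hgI hgI2
      have := hg s hst₀.le
      linarith
    have hHle : (∫ u in s..t, h u) ≤ a₂ := by
      obtain ⟨_, hhI2, _⟩ := hint t (s+γ) (lt_trans hst₀ hst) hsγ.le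
      have h3 : 0 ≤ ∫ u in t..(s+γ), h u :=
        intervalIntegral.integral_nonneg hsγ.le
          (fun u hu => hh0 u (lt_of_lt_of_le (lt_trans hst₀ hst) hu.1))
      have h4 := intervalIntegral.integral_add_adjacent_intervals hhI hhI2
      have := hh s hst₀.le
      linarith
    have hexp1 : (1:ℝ) ≤ Real.exp ((1 + 2*ε) * a₁) :=
      Real.one_le_exp (by positivity)
    by_cases hGY : IntervalIntegrable (fun u => g u * y u) volume s t
    · -- main case
      have hGYH : IntervalIntegrable (fun u => g u * y u + h u) volume s t := hGY.add hhI
      have hmemIcc : ∀ u : ℝ, u ∈ Set.Icc s t → u ∈ Set.uIcc s t := by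
        intro u hu; rw [Set.uIcc_of_le hst.le]; exact hu
      have hsub : ∀ u v : ℝ, u ∈ Set.Icc s t → v ∈ Set.Icc s t →
          IntervalIntegrable (fun x => g x * y x + h x) volume u v ∧
          IntervalIntegrable g volume u v ∧ IntervalIntegrable h volume u v ∧
          IntervalIntegrable (fun x => g x * y x) volume u v := by
        intro u v hu hv
        have hss : Set.uIcc u v ⊆ Set.uIcc s t :=
          Set.uIcc_subset_uIcc (hmemIcc u hu) (hmemIcc v hv)
        exact ⟨hGYH.mono_set hss, hgI.mono_set hss, hhI.mono_set hss, hGY.mono_set hss⟩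
      set M := y s + ∫ u in s..t, (g u * y u + h u) with hMdef
      have hM : ∀ τ ∈ Set.Icc s t, y τ ≤ M := by
        intro τ hτ
        have h1 := hdiff s τ hst₀ hτ.1
        have hi1 := (hsub s τ ⟨le_rfl, hst.le⟩ hτ).1
        have hi2 := (hsub τ t hτ ⟨hst.le, le_rfl⟩).1
        have h3 : 0 ≤ ∫ u in τ..t, (g u * y u + h u) :=
          intervalIntegral.integral_nonneg hτ.2 (fun u hu => by
            have hu₀ : t₀ < u := lt_of_lt_of_le hst₀ (hτ.1.trans hu.1)
            have h5 := mul_nonneg (hg0 u hu₀) (hy0 u hu₀)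
            have h6 := hh0 u hu₀
            linarith)
        have h4 := intervalIntegral.integral_add_adjacent_intervals hi1 hi2
        simp only [hMdef]
        linarith
      have hM0 : 0 ≤ M := le_trans (hy0 s hst₀) (hM s ⟨le_rfl, hst.le⟩)
      -- the per-piece Gronwall estimate
      have piece : ∀ u v : ℝ, s ≤ u → u ≤ v → v ≤ t → (∫ x in u..v, g x) ≤ ε →
          y v ≤ (y u + ∫ x in u..v, h x) * Real.exp ((1+2*ε) * ∫ x in u..v, g x) := by
        intro u v hsu huv hvt hκε
        have hu₀ : t₀ < u := lt_of_lt_of_le hst₀ hsu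
        have humem : u ∈ Set.Icc s t := ⟨hsu, huv.trans hvt⟩
        have hvmem : v ∈ Set.Icc s t := ⟨hsu.trans huv, hvt⟩
        set κ := ∫ x in u..v, g x with hκdef
        have hκ0 : 0 ≤ κ := intervalIntegral.integral_nonneg huv
          (fun x hx => hg0 x (lt_of_lt_of_le hu₀ hx.1))
        have hκ1 : κ < 1 := by linarith
        set H := ∫ x in u..v, h x with hHdef
        have hH0 : 0 ≤ H := intervalIntegral.integral_nonneg huv
          (fun x hx => hh0 x (lt_of_lt_of_le hu₀ hx.1))
        have hyu0 : 0 ≤ y u := hy0 u hu₀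
        set L := (y u + H) / (1 - κ) with hLdef
        have hLκ : L * (1 - κ) = y u + H := div_mul_cancel₀ _ (by linarith)
        have hiter : ∀ n : ℕ, ∀ τ ∈ Set.Icc u v, y τ ≤ L + κ^n * (M - L) := by
          intro n
          induction n with
          | zero =>
            intro τ hτ
            have := hM τ ⟨hsu.trans hτ.1, hτ.2.trans hvt⟩
            simpa using this
          | succ n ih =>
            intro τ hτ
            have hτ₀ : t₀ < τ := lt_of_lt_of_le hu₀ hτ.1
            have hτmem : τ ∈ Set.Icc s t := ⟨hsu.trans hτ.1, hτ.2.trans hvt⟩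
            have hB0 : 0 ≤ L + κ^n * (M - L) := le_trans hyu0 (ih u ⟨le_rfl, huv⟩)
            have hd := hdiff u τ hu₀ hτ.1
            have hiGY := (hsub u τ humem hτmem).2.2.2
            have hiH := (hsub u τ humem hτmem).2.2.1
            have hiG := (hsub u τ humem hτmem).2.1
            have hsplit : (∫ x in u..τ, (g x * y x + h x))
                = (∫ x in u..τ, g x * y x) + ∫ x in u..τ, h x :=
              intervalIntegral.integral_add hiGY hiH
            have hτvmem : τ ∈ Set.Icc s t := hτmem
            have hh2 : (∫ x in u..τ, h x) ≤ H := by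
              have hiH2 := (hsub τ v hτmem hvmem).2.2.1
              have h3 : 0 ≤ ∫ x in τ..v, h x := intervalIntegral.integral_nonneg hτ.2
                (fun x hx => hh0 x (lt_of_lt_of_le hτ₀ hx.1))
              have h4 := intervalIntegral.integral_add_adjacent_intervals hiH hiH2
              simp only [hHdef]
              linarith
            have hgy2 : (∫ x in u..τ, g x * y x) ≤ κ * (L + κ^n * (M - L)) := by
              have hle : (∫ x in u..τ, g x * y x)
                  ≤ ∫ x in u..τ, g x * (L + κ^n * (M - L)) := by
                apply intervalIntegral.integral_mono_on hτ.1 hiGY (hiG.mul_const _)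
                intro x hx
                have hx₀ : t₀ < x := lt_of_lt_of_le hu₀ hx.1
                exact mul_le_mul_of_nonneg_left (ih x ⟨hx.1, hx.2.trans hτ.2⟩) (hg0 x hx₀)
              have heq : (∫ x in u..τ, g x * (L + κ^n * (M - L)))
                  = (∫ x in u..τ, g x) * (L + κ^n * (M - L)) :=
                intervalIntegral.integral_mul_const _ _
              have hgle : (∫ x in u..τ, g x) ≤ κ := by
                have hiG2 := (hsub τ v hτmem hvmem).2.1
                have h3 : 0 ≤ ∫ x in τ..v, g x := intervalIntegral.integral_nonneg hτ.2
                  (fun x hx => hg0 x (lt_of_lt_of_le hτ₀ hx.1))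
                have h4 := intervalIntegral.integral_add_adjacent_intervals hiG hiG2
                simp only [hκdef]
                linarith
              calc (∫ x in u..τ, g x * y x)
                  ≤ (∫ x in u..τ, g x) * (L + κ^n * (M - L)) := by rw [← heq]; exact hle
                _ ≤ κ * (L + κ^n * (M - L)) := mul_le_mul_of_nonneg_right hgle hB0
            have hkey : y u + H + κ * (L + κ^n * (M - L)) = L + κ^(n+1) * (M - L) := by
              rw [← hLκ]; ring
            rw [hsplit] at hd
            linarith
        have hlim : Filter.Tendsto (fun n : ℕ => L + κ^n * (M - L)) Filter.atTop (nhds L) := by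
          have h1 : Filter.Tendsto (fun n : ℕ => κ^n) Filter.atTop (nhds 0) :=
            tendsto_pow_atTop_nhds_zero_of_lt_one hκ0 hκ1
          have h2 := (h1.mul_const (M - L)).const_add L
          simpa using h2
        have hyv : y v ≤ L := ge_of_tendsto hlim
          (Filter.Eventually.of_forall fun n => hiter n v ⟨huv, le_rfl⟩)
        have hexp : 1 ≤ (1 - κ) * Real.exp ((1+2*ε) * κ) := by
          have h1 := Real.add_one_le_exp ((1+2*ε) * κ)
          have h2 : (1 - κ) * ((1+2*ε) * κ + 1) ≤ (1 - κ) * Real.exp ((1+2*ε) * κ) :=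
            mul_le_mul_of_nonneg_left h1 (by linarith)
          nlinarith [mul_le_mul_of_nonneg_left hκε hκ0,
            mul_nonneg (mul_nonneg hκ0 hκ0) (by linarith : (0:ℝ) ≤ 1 - 2*ε)]
        have hfinal : L ≤ (y u + H) * Real.exp ((1+2*ε) * κ) := by
          rw [hLdef, div_le_iff₀ (by linarith : (0:ℝ) < 1 - κ)]
          calc y u + H = (y u + H) * 1 := by ring
            _ ≤ (y u + H) * ((1 - κ) * Real.exp ((1+2*ε) * κ)) :=
                mul_le_mul_of_nonneg_left hexp (by linarith)
            _ = (y u + H) * Real.exp ((1+2*ε) * κ) * (1 - κ) := by ring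
        linarith
      -- construct the partition
      have hGcont : ContinuousOn (fun τ => ∫ x in s..τ, g x) (Set.Icc s t) := by
        have := intervalIntegral.continuousOn_primitive_interval' hgI Set.left_mem_uIcc
        rwa [Set.uIcc_of_le hst.le] at this
      have hucont := (isCompact_Icc (a := s) (b := t)).uniformContinuousOn_of_continuous hGcont
      obtain ⟨δ, hδ0, hδ⟩ := Metric.uniformContinuousOn_iff.1 hucont ε hε
      obtain ⟨n, hn⟩ := exists_nat_gt ((t - s)/δ)
      have hts : 0 < t - s := by linarith
      have hn0 : 0 < (n:ℝ) := lt_of_le_of_lt (div_nonneg hts.le hδ0.le) hn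
      set w := (t - s)/n with hwdef
      have hw0 : 0 < w := by rw [hwdef]; exact div_pos hts hn0
      have hwδ : w < δ := by
        rw [hwdef, div_lt_iff₀ hn0]
        rw [div_lt_iff₀ hδ0] at hn
        linarith [mul_pos hδ0 (sub_pos.2 hn)]
      set τp : ℕ → ℝ := fun i => s + i * w with hτdef
      have hτ0 : τp 0 = s := by simp [hτdef]
      have hτn : τp n = t := by
        simp only [hτdef, hwdef]
        field_simp
        ring
      have hτmono : ∀ i j : ℕ, i ≤ j → τp i ≤ τp j := by
        intro i j hij
        simp only [hτdef]
        have hcast : (i:ℝ) ≤ j := Nat.cast_le.2 hij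
        have := mul_le_mul_of_nonneg_right hcast hw0.le
        linarith
      have hτmem : ∀ i : ℕ, i ≤ n → τp i ∈ Set.Icc s t := by
        intro i hi
        constructor
        · rw [← hτ0]; exact hτmono 0 i (Nat.zero_le _)
        · rw [← hτn]; exact hτmono i n hi
      have hκi : ∀ i : ℕ, i + 1 ≤ n → (∫ x in τp i..τp (i+1), g x) ≤ ε := by
        intro i hi
        have hmem1 := hτmem i (le_trans (Nat.le_succ i) hi)
        have hmem2 := hτmem (i+1) hi
        have hdist : dist (τp (i+1)) (τp i) < δ := by
          have : τp (i+1) - τp i = w := by simp only [hτdef]; push_cast; ring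
          rw [Real.dist_eq, this, abs_of_pos hw0]
          exact hwδ
        have hd := hδ (τp (i+1)) hmem2 (τp i) hmem1 hdist
        rw [Real.dist_eq] at hd
        have hadd2 := intervalIntegral.integral_add_adjacent_intervals
          (hsub s (τp i) ⟨le_rfl, hst.le⟩ hmem1).2.1
          (hsub (τp i) (τp (i+1)) hmem1 hmem2).2.1
        have habs := abs_sub_abs_le_abs_sub (0:ℝ) (0:ℝ)
        have := le_of_lt (lt_of_le_of_lt (le_abs_self _) hd)
        linarith
      -- across pieces
      have hacross : ∀ i : ℕ, i ≤ n →
          y (τp i) ≤ (y s + ∫ x in s..τp i, h x) * Real.exp ((1+2*ε) * ∫ x in s..τp i, g x) := by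
        intro i
        induction i with
        | zero => intro _; simp [hτ0]
        | succ i ih =>
          intro hi
          have hi' : i ≤ n := Nat.le_of_succ_le hi
          have h1 := ih hi'
          have hmem1 := hτmem i hi'
          have hmem2 := hτmem (i+1) hi
          have hpiece := piece (τp i) (τp (i+1)) hmem1.1 (hτmono i (i+1) (Nat.le_succ i))
            hmem2.2 (hκi i hi)
          have hHadd := intervalIntegral.integral_add_adjacent_intervals
            (hsub s (τp i) ⟨le_rfl, hst.le⟩ hmem1).2.2.1
            (hsub (τp i) (τp (i+1)) hmem1 hmem2).2.2.1
          have hGadd := intervalIntegral.integral_add_adjacent_intervals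
            (hsub s (τp i) ⟨le_rfl, hst.le⟩ hmem1).2.1
            (hsub (τp i) (τp (i+1)) hmem1 hmem2).2.1
          have hGi0 : 0 ≤ ∫ x in s..τp i, g x := intervalIntegral.integral_nonneg hmem1.1
            (fun x hx => hg0 x (lt_of_lt_of_le hst₀ hx.1))
          have hgi0 : 0 ≤ ∫ x in τp i..τp (i+1), g x :=
            intervalIntegral.integral_nonneg (hτmono i (i+1) (Nat.le_succ i))
            (fun x hx => hg0 x (lt_of_lt_of_le hst₀ (hmem1.1.trans hx.1)))
          have hhi0 : 0 ≤ ∫ x in τp i..τp (i+1), h x :=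
            intervalIntegral.integral_nonneg (hτmono i (i+1) (Nat.le_succ i))
            (fun x hx => hh0 x (lt_of_lt_of_le hst₀ (hmem1.1.trans hx.1)))
          have hHi0 : 0 ≤ ∫ x in s..τp i, h x := intervalIntegral.integral_nonneg hmem1.1
            (fun x hx => hh0 x (lt_of_lt_of_le hst₀ hx.1))
          have hys0 : 0 ≤ y s := hy0 s hst₀
          have hE1 : (1:ℝ) ≤ Real.exp ((1+2*ε) * ∫ x in s..τp i, g x) :=
            Real.one_le_exp (by positivity)
          have hE2 : (0:ℝ) < Real.exp ((1+2*ε) * ∫ x in τp i..τp (i+1), g x) :=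
            Real.exp_pos _
          calc y (τp (i+1))
              ≤ (y (τp i) + ∫ x in τp i..τp (i+1), h x)
                  * Real.exp ((1+2*ε) * ∫ x in τp i..τp (i+1), g x) := hpiece
            _ ≤ ((y s + ∫ x in s..τp i, h x) * Real.exp ((1+2*ε) * ∫ x in s..τp i, g x)
                  + ∫ x in τp i..τp (i+1), h x)
                  * Real.exp ((1+2*ε) * ∫ x in τp i..τp (i+1), g x) := by
                apply mul_le_mul_of_nonneg_right _ hE2.le
                linarith
            _ ≤ ((y s + ∫ x in s..τp i, h x) + ∫ x in τp i..τp (i+1), h x)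
                  * Real.exp ((1+2*ε) * ∫ x in s..τp i, g x)
                  * Real.exp ((1+2*ε) * ∫ x in τp i..τp (i+1), g x) := by
                apply mul_le_mul_of_nonneg_right _ hE2.le
                nlinarith
            _ = (y s + ∫ x in s..τp (i+1), h x)
                  * Real.exp ((1+2*ε) * ∫ x in s..τp (i+1), g x) := by
                rw [← hHadd, ← hGadd, mul_add, Real.exp_add]
                ring
      have hfin := hacross n le_rfl
      rw [hτn] at hfin
      have hHs0 : 0 ≤ ∫ x in s..t, h x := intervalIntegral.integral_nonneg hst.le
        (fun x hx => hh0 x (lt_of_lt_of_le hst₀ hx.1))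
      have hA : y s + ∫ x in s..t, h x ≤ m + a₂ := by linarith
      have hE : Real.exp ((1+2*ε) * ∫ x in s..t, g x) ≤ Real.exp ((1+2*ε) * a₁) :=
        Real.exp_le_exp.2 (mul_le_mul_of_nonneg_left hKle (by linarith))
      have hApos : 0 ≤ y s + ∫ x in s..t, h x := add_nonneg (hy0 s hst₀) hHs0
      calc y t ≤ (y s + ∫ x in s..t, h x) * Real.exp ((1+2*ε) * ∫ x in s..t, g x) := hfin
        _ ≤ (m + a₂) * Real.exp ((1+2*ε) * a₁) :=
            mul_le_mul hA hE (Real.exp_pos _).le (by linarith)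
        _ = (a₃ / (γ - ε) + ε + a₂) * Real.exp ((1 + 2*ε) * a₁) := by rw [hm]
    · -- degenerate case: the integral is 0 by convention
      have hnot : ¬ IntervalIntegrable (fun u => g u * y u + h u) volume s t := by
        intro hc
        exact hGY (by simpa using hc.sub hhI)
      have h0 : (∫ u in s..t, (g u * y u + h u)) = 0 :=
        intervalIntegral.integral_undef hnot
      have hd := hdiff s t hst₀ hst.le
      rw [h0] at hd
      have hyt : y t ≤ m := by linarith
      have h5 : (0:ℝ) ≤ m + a₂ := by linarith
      calc y t ≤ m + a₂ := by linarith
        _ = (m + a₂) * 1 := by ring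
        _ ≤ (m + a₂) * Real.exp ((1 + 2*ε) * a₁) := mul_le_mul_of_nonneg_left hexp1 h5
  -- Step B: pass to the limit ε → 0⁺
  have hcont : Filter.Tendsto (fun ε : ℝ => (a₃ / (γ - ε) + ε + a₂) * Real.exp ((1 + 2*ε) * a₁))
      (nhdsWithin 0 (Set.Ioi 0)) (nhds ((a₃ / γ + a₂) * Real.exp a₁)) := by
    have hc : ContinuousAt (fun ε : ℝ => (a₃ / (γ - ε) + ε + a₂) * Real.exp ((1 + 2*ε) * a₁)) 0 := by
      have h1 : ContinuousAt (fun ε : ℝ => γ - ε) 0 := by fun_prop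
      have h2 : ContinuousAt (fun ε : ℝ => a₃ / (γ - ε)) 0 :=
        continuousAt_const.div h1 (by simpa using hγ.ne')
      have h3 : ContinuousAt (fun ε : ℝ => Real.exp ((1 + 2*ε) * a₁)) 0 := by fun_prop
      exact ((h2.add continuousAt_id).add continuousAt_const).mul h3
    have := hc.continuousWithinAt (s := Set.Ioi 0)
    unfold ContinuousWithinAt at this
    convert this using 2
    norm_num
  refine ge_of_tendsto hcont ?_
  have hmem : Set.Ioo (0:ℝ) (min γ (1/2)) ∈ nhdsWithin (0:ℝ) (Set.Ioi 0) :=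
    Ioo_mem_nhdsGT_of_mem ⟨le_refl 0, lt_min hγ (by norm_num)⟩
  filter_upwards [hmem] with ε hε
  exact key ε hε.1 (lt_of_lt_of_le hε.2 (min_le_left _ _)) (le_of_lt (lt_of_lt_of_le hε.2 (min_le_right _ _)))
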